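/- Let b, C_p, C_q, β, α > 0 and exponents 2 < p < 14/3 < q < 6. Set α_V = (b/(12(q−p)))³ · ( q(14−3p)/C_q )^{(14−3p)/(q−p)} · ( p(3q−14)/(β C_p) )^{(3q−14)/(q−p)}. Define φ(t) = (b/4) t^{(14−3p)/2} − (C_q/q) α^{(6−q)/4} t^{3(q−p)/2} for t > 0 and let t̄ = ( q b (14−3p)/(12 C_q (q−p)) )^{2/(3q−14)} α^{(q−6)/(2(3q−14))} be its maximizer. If 0 < α < α_V, then φ(t̄) > (β C_p / p) · α^{(6−p)/4}. -/

import Mathlib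

/-- Key estimate (3.1): if `0 < α < α_V`, then the maximum value `φ(t̄)` of the
auxiliary function `φ` strictly exceeds `(β C_p / p) α^{(6-p)/4}`. -/
theorem stmt_3 (b Cp Cq β α p q : ℝ) (hb : 0 < b) (hCp : 0 < Cp) (hCq : 0 < Cq)
    (hβ : 0 < β) (hα : 0 < α)
    (hp : 2 < p) (hp' : p < 14 / 3) (hq : 14 / 3 < q) (hq' : q < 6)
    (αV : ℝ)
    (hαV : αV = (b / (12 * (q - p))) ^ (3 : ℕ)
        * (q * (14 - 3 * p) / Cq) ^ ((14 - 3 * p) / (q - p))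
        * (p * (3 * q - 14) / (β * Cp)) ^ ((3 * q - 14) / (q - p)))
    (φ : ℝ → ℝ)
    (hφ : φ = fun t => b / 4 * t ^ ((14 - 3 * p) / 2)
        - Cq / q * α ^ ((6 - q) / 4) * t ^ (3 * (q - p) / 2))
    (tbar : ℝ)
    (htbar : tbar = (q * b * (14 - 3 * p) / (12 * Cq * (q - p))) ^ (2 / (3 * q - 14))
        * α ^ ((q - 6) / (2 * (3 * q - 14))))
    (hαlt : α < αV) :
    β * Cp / p * α ^ ((6 - p) / 4) < φ tbar := by
  have hq0 : 0 < q := by linarith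
  have hp0 : 0 < p := by linarith
  have hr : 0 < 14 - 3 * p := by linarith
  have hs : 0 < 3 * q - 14 := by linarith
  have hd : 0 < q - p := by linarith
  have hs0 : (3 * q - 14) ≠ 0 := ne_of_gt hs
  have hd0 : (q - p) ≠ 0 := ne_of_gt hd
  set r := 14 - 3 * p with hrdef
  set s := 3 * q - 14 with hsdef
  set d := q - p with hddef
  have hX : 0 < b / (12 * d) := by positivity
  have hY : 0 < q * r / Cq := by positivity
  have hZ : 0 < p * s / (β * Cp) := by positivity
  set X := b / (12 * d) with hXdef
  set Y := q * r / Cq with hYdef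
  set Z := p * s / (β * Cp) with hZdef
  have hA : 0 < q * b * r / (12 * Cq * d) := by positivity
  set A := q * b * r / (12 * Cq * d) with hAdef
  have hAXY : A = Y * X := by
    rw [hAdef, hYdef, hXdef]; field_simp
  -- Step 1 : compute αV ^ (d / s)
  have key1 : αV ^ (d / s) = A ^ (r / s) * X * Z := by
    have h3 : X ^ (3 : ℕ) = X ^ ((3 : ℝ)) := by
      rw [← Real.rpow_natCast X 3]; norm_num
    rw [hαV, h3, Real.mul_rpow (by positivity) (by positivity),
        Real.mul_rpow (by positivity) (by positivity),
        ← Real.rpow_mul hX.le, ← Real.rpow_mul hY.le, ← Real.rpow_mul hZ.le]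
    have e1 : 3 * (d / s) = r / s + 1 := by
      field_simp; simp only [hrdef, hsdef, hddef]; ring
    have e2 : r / d * (d / s) = r / s := by
      field_simp
    have e3 : s / d * (d / s) = 1 := by
      field_simp
    rw [e1, e2, e3, Real.rpow_one, Real.rpow_add hX, Real.rpow_one,
        hAXY, Real.mul_rpow hY.le hX.le]
    ring
  -- Step 2 : compute φ tbar
  have key2 : φ tbar = b * s / (12 * d) * (A ^ (r / s) * α ^ ((q - 6) * r / (4 * s))) := by
    simp only [hφ]
    rw [htbar, Real.mul_rpow (by positivity) (by positivity),
        Real.mul_rpow (by positivity) (by positivity),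
        ← Real.rpow_mul hA.le, ← Real.rpow_mul hα.le,
        ← Real.rpow_mul hA.le, ← Real.rpow_mul hα.le]
    have e4 : 2 / s * (r / 2) = r / s := by field_simp
    have e5 : (q - 6) / (2 * s) * (r / 2) = (q - 6) * r / (4 * s) := by
      rw [div_mul_div_comm]; congr 1; ring
    have e6 : 2 / s * (3 * d / 2) = r / s + 1 := by
      field_simp; simp only [hrdef, hsdef, hddef]; ring
    have e7 : (q - 6) / (2 * s) * (3 * d / 2) = 3 * (q - 6) * d / (4 * s) := by
      rw [div_mul_div_comm]; rw [show (q-6)*(3*d) = 3*(q-6)*d by ring, show 2*s*2 = 4*s by ring]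
    rw [e4, e5, e6, e7, Real.rpow_add hA, Real.rpow_one]
    have e8 : α ^ ((6 - q) / 4) * α ^ (3 * (q - 6) * d / (4 * s))
        = α ^ ((q - 6) * r / (4 * s)) := by
      rw [← Real.rpow_add hα]
      congr 1
      field_simp; simp only [hrdef, hsdef, hddef]; ring
    have e9 : Cq / q * A = b * r / (12 * d) := by
      rw [hAdef]; field_simp
    calc b / 4 * (A ^ (r / s) * α ^ ((q - 6) * r / (4 * s)))
          - Cq / q * α ^ ((6 - q) / 4) * (A ^ (r / s) * A * α ^ (3 * (q - 6) * d / (4 * s)))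
        = b / 4 * (A ^ (r / s) * α ^ ((q - 6) * r / (4 * s)))
          - (Cq / q * A) * (A ^ (r / s)
            * (α ^ ((6 - q) / 4) * α ^ (3 * (q - 6) * d / (4 * s)))) := by ring
      _ = b / 4 * (A ^ (r / s) * α ^ ((q - 6) * r / (4 * s)))
          - b * r / (12 * d) * (A ^ (r / s) * α ^ ((q - 6) * r / (4 * s))) := by
            rw [e8, e9]
      _ = b * s / (12 * d) * (A ^ (r / s) * α ^ ((q - 6) * r / (4 * s))) := by
            have hrs : b / 4 - b * r / (12 * d) = b * s / (12 * d) := by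
              field_simp; simp only [hrdef, hsdef, hddef]; ring
            linear_combination (A ^ (r / s) * α ^ ((q - 6) * r / (4 * s))) * hrs
  -- Step 3 : the strict inequality
  have expo : (6 - p) / 4 = d / s + (q - 6) * r / (4 * s) := by
    field_simp; simp only [hrdef, hsdef, hddef]; ring
  have hαVpos : 0 < αV := lt_trans hα hαlt
  have hstep : α ^ (d / s) < αV ^ (d / s) :=
    Real.rpow_lt_rpow hα.le hαlt (by positivity)
  have hfin : β * Cp / p * (A ^ (r / s) * X * Z) * α ^ ((q - 6) * r / (4 * s))
      = b * s / (12 * d) * (A ^ (r / s) * α ^ ((q - 6) * r / (4 * s))) := by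
    rw [hXdef, hZdef]; field_simp
  calc β * Cp / p * α ^ ((6 - p) / 4)
      = β * Cp / p * (α ^ (d / s) * α ^ ((q - 6) * r / (4 * s))) := by
        rw [expo, Real.rpow_add hα]
    _ < β * Cp / p * (αV ^ (d / s) * α ^ ((q - 6) * r / (4 * s))) := by
        apply mul_lt_mul_of_pos_left _ (by positivity)
        exact mul_lt_mul_of_pos_right hstep (by positivity)
    _ = φ tbar := by
        rw [key1, key2, ← hfin]; ring
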